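/- Let S ⊆ {0, 1, …, k} be a finite set of nonnegative integers containing 0 and k, with gcd(S \ {0}) = 1 (i.e., the greatest common divisor of the nonzero elements of S is 1). Then there exists a positive integer M such that for every positive integer N and every integer i with M < i < kN − M, the integer i can be written as a sum of exactly N elements of S (with repetition allowed). -/

import Mathlib

def Sp (T : Finset ℕ) (n : ℕ) : Prop :=
  ∃ t : Multiset ℕ, (∀ x ∈ t, x ∈ T) ∧ t.sum = n

lemma sp_zero (T : Finset ℕ) : Sp T 0 := ⟨0, by simp, rfl⟩

lemma sp_mem {T : Finset ℕ} {x : ℕ} (hx : x ∈ T) : Sp T x :=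
  ⟨{x}, by simpa using hx, by simp⟩

lemma sp_add {T : Finset ℕ} {a b : ℕ} : Sp T a → Sp T b → Sp T (a + b) := by
  rintro ⟨t, ht, rfl⟩ ⟨u, hu, rfl⟩
  exact ⟨t + u, by intro x hx; rcases Multiset.mem_add.mp hx with h | h
                   exacts [ht x h, hu x h], by simp⟩

lemma sp_mul {T : Finset ℕ} (c : ℕ) {n : ℕ} (h : Sp T n) : Sp T (c * n) := by
  induction c with
  | zero => simpa using sp_zero T
  | succ c ih => have := sp_add ih h; simpa [Nat.succ_mul] using this

lemma sp_bezout (T : Finset ℕ) : ∃ p q, Sp T p ∧ Sp T q ∧ p = q + T.gcd id := by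
  classical
  induction T using Finset.induction_on with
  | empty => exact ⟨0, 0, sp_zero _, sp_zero _, by simp⟩
  | insert x T hxT ih =>
    obtain ⟨p, q, hp, hq, hpq⟩ := ih
    set g := T.gcd id with hg
    set d := Nat.gcd x g with hd
    have hgcd_ins : (insert x T).gcd id = d := by
      rw [Finset.gcd_insert]; rfl
    have hbez : (d : ℤ) = x * Nat.gcdA x g + g * Nat.gcdB x g := Nat.gcd_eq_gcd_ab x g
    set a := Nat.gcdA x g
    set b := Nat.gcdB x g
    set ap := a.toNat
    set an := (-a).toNat
    set bp := b.toNat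
    set bn := (-b).toNat
    have ha : (ap : ℤ) - an = a := by simp [ap, an]
    have hb : (bp : ℤ) - bn = b := by simp [bp, bn]
    have key : ap * x + bp * p + bn * q = (an * x + bn * p + bp * q) + d := by
      have hpq' : (p : ℤ) = q + g := by exact_mod_cast hpq
      have : (ap : ℤ) * x + bp * p + bn * q = (an * x + bn * p + bp * q) + d := by
        rw [hbez]; nlinarith [ha, hb, hpq']
      exact_mod_cast this
    have hsub : ∀ {y : ℕ}, Sp T y → Sp (insert x T) y := by
      intro y
      rintro ⟨t, ht, rfl⟩
      exact ⟨t, fun y hy => Finset.mem_insert_of_mem (ht y hy), rfl⟩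
    have hxmem : Sp (insert x T) x := sp_mem (Finset.mem_insert_self x T)
    refine ⟨ap * x + bp * p + bn * q, an * x + bn * p + bp * q, ?_, ?_, by rw [hgcd_ins]; exact key⟩
    · exact sp_add (sp_add (sp_mul ap hxmem) (sp_mul bp (hsub hp))) (sp_mul bn (hsub hq))
    · exact sp_add (sp_add (sp_mul an hxmem) (sp_mul bn (hsub hp))) (sp_mul bp (hsub hq))

lemma sp_large (T : Finset ℕ) (hg : T.gcd id = 1) :
    ∃ B, ∀ n, B ≤ n → Sp T n := by
  obtain ⟨p, q, hp, hq, hpq⟩ := sp_bezout T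
  rw [hg] at hpq
  rcases Nat.eq_zero_or_pos q with hq0 | hq0
  · subst hq0
    refine ⟨0, fun n _ => ?_⟩
    have : Sp T (n * p) := sp_mul n hp
    simpa [hpq] using this
  · refine ⟨q * q, fun n hn => ?_⟩
    set r := n % q with hr
    set m := n / q with hm
    have hdm : q * m + r = n := Nat.div_add_mod n q
    have hrq : r < q := Nat.mod_lt _ hq0
    have hqm : q ≤ m := by
      rw [hm]; exact Nat.le_div_iff_mul_le hq0 |>.mpr (by nlinarith)
    have heq : r * p + (m - r) * q = n := by
      have : r * p = r * q + r := by rw [hpq]; ring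
      have h2 : (m - r) * q = m * q - r * q := by rw [Nat.sub_mul]
      have hrm : r ≤ m := le_of_lt (lt_of_lt_of_le hrq hqm)
      have : r * q ≤ m * q := Nat.mul_le_mul_right _ hrm
      nlinarith [Nat.sub_add_cancel this]
    rw [← heq]
    exact sp_add (sp_mul r hp) (sp_mul (m - r) hq)

lemma fin_rep (S : Finset ℕ) (h0 : 0 ∈ S) :
    ∀ (N : ℕ) (t : Multiset ℕ), (∀ x ∈ t, x ∈ S) → Multiset.card t ≤ N →
    ∃ f : Fin N → ℕ, (∀ j, f j ∈ S) ∧ ∑ j, f j = t.sum := by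
  intro N
  induction N with
  | zero =>
    intro t ht hc
    have : t = 0 := Multiset.card_eq_zero.mp (Nat.le_zero.mp hc)
    subst this
    exact ⟨Fin.elim0, fun j => j.elim0, by simp⟩
  | succ N ih =>
    intro t ht hc
    by_cases h : t = 0
    · subst h
      exact ⟨fun _ => 0, fun _ => h0, by simp⟩
    · obtain ⟨a, ha⟩ := Multiset.exists_mem_of_ne_zero h
      have hcons : a ::ₘ t.erase a = t := Multiset.cons_erase ha
      obtain ⟨g, hg, hgs⟩ := ih (t.erase a)
        (fun x hx => ht x (Multiset.mem_of_mem_erase hx))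
        (by
          have hcc := congrArg Multiset.card hcons
          rw [Multiset.card_cons] at hcc
          omega)
      refine ⟨Fin.cons a g, ?_, ?_⟩
      · intro j
        refine Fin.cases ?_ ?_ j
        · exact ht a ha
        · exact fun i => hg i
      · have hsum := congrArg Multiset.sum hcons
        rw [Multiset.sum_cons] at hsum
        rw [Fin.sum_cons, hgs, hsum]

lemma card_le_sum_of_pos (t : Multiset ℕ) (h : ∀ x ∈ t, 1 ≤ x) :
    Multiset.card t ≤ t.sum := by
  induction t using Multiset.induction_on with
  | empty => simp
  | cons a s ih =>
    simp only [Multiset.card_cons, Multiset.sum_cons]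
    have ha := h a (Multiset.mem_cons_self a s)
    have := ih (fun x hx => h x (Multiset.mem_cons_of_mem hx))
    omega

theorem stmt_12 (k : ℕ) (S : Finset ℕ) (h0 : 0 ∈ S) (hk : k ∈ S)
    (hbound : ∀ s ∈ S, s ≤ k) (hgcd : (S.erase 0).gcd id = 1) :
    ∃ M : ℕ, 0 < M ∧ ∀ N : ℕ, 0 < N → ∀ i : ℕ, M < i → i < k * N - M →
      ∃ f : Fin N → ℕ, (∀ j, f j ∈ S) ∧ ∑ j, f j = i := by
  classical
  rcases Nat.eq_zero_or_pos k with rfl | hk1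
  · exfalso
    have he : S.erase 0 = ∅ := by
      ext x
      simp only [Finset.mem_erase, Finset.notMem_empty, iff_false, not_and]
      intro hx hxS
      exact hx (Nat.le_zero.mp (hbound x hxS))
    rw [he] at hgcd
    simp at hgcd
  obtain ⟨B, hB⟩ := sp_large (S.erase 0) hgcd
  set C := B + k with hC
  refine ⟨B + C * k + 1, Nat.succ_pos _, ?_⟩
  intro N hN i hMi hiN
  have hiN' : i + (B + C * k + 1) < k * N := by omega
  have hBi : B < i := by omega
  set e := i - B with he
  have hdm : k * (e / k) + e % k = e := Nat.div_add_mod e k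
  set t := e / k with ht
  set r := B + e % k with hr
  have hrB : B ≤ r := Nat.le_add_right _ _
  have hrk : r < B + k := by
    have := Nat.mod_lt e hk1
    omega
  have hrt : r + k * t = i := by omega
  obtain ⟨u, hu, hus⟩ := hB r hrB
  have hu1 : ∀ x ∈ u, 1 ≤ x := by
    intro x hx
    have := hu x hx
    rw [Finset.mem_erase] at this
    omega
  have hcard_u : Multiset.card u ≤ r := hus ▸ card_le_sum_of_pos u hu1
  set v := u + Multiset.replicate t k with hv
  have hv_mem : ∀ x ∈ v, x ∈ S := by
    intro x hx
    rcases Multiset.mem_add.mp hx with h | h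
    · exact Finset.mem_of_mem_erase (hu x h)
    · rw [Multiset.eq_of_mem_replicate h]; exact hk
  have hv_sum : v.sum = i := by
    rw [hv, Multiset.sum_add, Multiset.sum_replicate, smul_eq_mul, hus, mul_comm, hrt]
  have htC : t + C < N := by
    have h1 : (t + C) * k < N * k := by nlinarith
    exact Nat.lt_of_mul_lt_mul_right h1
  have hv_card : Multiset.card v ≤ N := by
    rw [hv, Multiset.card_add, Multiset.card_replicate]
    omega
  obtain ⟨f, hf, hfs⟩ := fin_rep S h0 N v hv_mem hv_card
  exact ⟨f, hf, by rw [hfs, hv_sum]⟩
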